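/- Let V be a 4-dimensional real vector space with a Lorentzian metric g, let ν ∈ V* be non-null (g⁻¹(ν,ν) ≠ 0), and let W be a (4,0)-Weyl-type tensor (having the symmetries of the Riemann tensor and totally trace-free with respect to g). If W(·,·,·, ν♯) = 0 (i.e., ν♯ inserted in the last slot annihilates W, equivalently W_{abcd}ν^d = 0), then W = 0. -/

import Mathlib

set_option maxHeartbeats 2000000 in
theorem aux13 (c0 c1 c2 c3 : ℝ) (w : Fin 4 → Fin 4 → Fin 4 → Fin 4 → ℝ)
    (hs1 : ∀ i j k l : Fin 4, w i j k l = -w j i k l)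
    (hs2 : ∀ i j k l : Fin 4, w i j k l = -w i j l k)
    (hsp : ∀ i j k l : Fin 4, w i j k l = w k l i j)
    (hB : w 0 1 2 3 + w 0 2 3 1 + w 0 3 1 2 = 0)
    (hC : ∀ i j k : Fin 4, c0 * w i j k 0 + c1 * w i j k 1 + c2 * w i j k 2 + c3 * w i j k 3 = 0)
    (hT : ∀ b d : Fin 4, w 0 b 0 d + w 1 b 1 d + w 2 b 2 d - w 3 b 3 d = 0)
    (hQ : c0 ^ 2 + c1 ^ 2 + c2 ^ 2 - c3 ^ 2 ≠ 0) :
    ∀ i j k l : Fin 4, w i j k l = 0 := by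
  have hCp010 : (1) * c1 * w 0 1 0 1 + (1) * c2 * w 0 1 0 2 + (1) * c3 * w 0 1 0 3 = 0 := by
    linear_combination (1) * (hC 0 1 0) + (-1/2) * c0 * (hs2 0 1 0 0)
  have hCp011 : (-1) * c0 * w 0 1 0 1 + (1) * c2 * w 0 1 1 2 + (1) * c3 * w 0 1 1 3 = 0 := by
    linear_combination (1) * (hC 0 1 1) + (-1) * c0 * (hs2 0 1 1 0) + (-1/2) * c1 * (hs2 0 1 1 1)
  have hCp012 : (-1) * c0 * w 0 1 0 2 + (-1) * c1 * w 0 1 1 2 + (1) * c3 * w 0 1 2 3 = 0 := by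
    linear_combination (1) * (hC 0 1 2) + (-1) * c0 * (hs2 0 1 2 0) + (-1) * c1 * (hs2 0 1 2 1) + (-1/2) * c2 * (hs2 0 1 2 2)
  have hCp013 : (-1) * c0 * w 0 1 0 3 + (-1) * c1 * w 0 1 1 3 + (-1) * c2 * w 0 1 2 3 = 0 := by
    linear_combination (1) * (hC 0 1 3) + (-1) * c0 * (hs2 0 1 3 0) + (-1) * c1 * (hs2 0 1 3 1) + (-1) * c2 * (hs2 0 1 3 2) + (-1/2) * c3 * (hs2 0 1 3 3)
  have hCp020 : (1) * c1 * w 0 1 0 2 + (1) * c2 * w 0 2 0 2 + (1) * c3 * w 0 2 0 3 = 0 := by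
    linear_combination (1) * (hC 0 2 0) + (-1/2) * c0 * (hs2 0 2 0 0) + (-1) * c1 * (hsp 0 2 0 1)
  have hCp021 : (-1) * c0 * w 0 1 0 2 + (1) * c2 * w 0 2 1 2 + (1) * c3 * w 0 2 1 3 = 0 := by
    linear_combination (1) * (hC 0 2 1) + (-1) * c0 * (hs2 0 2 1 0) + (1) * c0 * (hsp 0 2 0 1) + (-1/2) * c1 * (hs2 0 2 1 1)
  have hCp022 : (-1) * c0 * w 0 2 0 2 + (-1) * c1 * w 0 2 1 2 + (1) * c3 * w 0 2 2 3 = 0 := by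
    linear_combination (1) * (hC 0 2 2) + (-1) * c0 * (hs2 0 2 2 0) + (-1) * c1 * (hs2 0 2 2 1) + (-1/2) * c2 * (hs2 0 2 2 2)
  have hCp023 : (-1) * c0 * w 0 2 0 3 + (-1) * c1 * w 0 2 1 3 + (-1) * c2 * w 0 2 2 3 = 0 := by
    linear_combination (1) * (hC 0 2 3) + (-1) * c0 * (hs2 0 2 3 0) + (-1) * c1 * (hs2 0 2 3 1) + (-1) * c2 * (hs2 0 2 3 2) + (-1/2) * c3 * (hs2 0 2 3 3)
  have hCp030 : (1) * c1 * w 0 1 0 3 + (1) * c2 * w 0 2 0 3 + (1) * c3 * w 0 3 0 3 = 0 := by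
    linear_combination (1) * (hC 0 3 0) + (-1/2) * c0 * (hs2 0 3 0 0) + (-1) * c1 * (hsp 0 3 0 1) + (-1) * c2 * (hsp 0 3 0 2)
  have hCp031 : (-1) * c0 * w 0 1 0 3 + (1) * c2 * w 0 3 1 2 + (1) * c3 * w 0 3 1 3 = 0 := by
    linear_combination (1) * (hC 0 3 1) + (-1) * c0 * (hs2 0 3 1 0) + (1) * c0 * (hsp 0 3 0 1) + (-1/2) * c1 * (hs2 0 3 1 1)
  have hCp032 : (-1) * c0 * w 0 2 0 3 + (-1) * c1 * w 0 3 1 2 + (1) * c3 * w 0 3 2 3 = 0 := by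
    linear_combination (1) * (hC 0 3 2) + (-1) * c0 * (hs2 0 3 2 0) + (1) * c0 * (hsp 0 3 0 2) + (-1) * c1 * (hs2 0 3 2 1) + (-1/2) * c2 * (hs2 0 3 2 2)
  have hCp033 : (-1) * c0 * w 0 3 0 3 + (-1) * c1 * w 0 3 1 3 + (-1) * c2 * w 0 3 2 3 = 0 := by
    linear_combination (1) * (hC 0 3 3) + (-1) * c0 * (hs2 0 3 3 0) + (-1) * c1 * (hs2 0 3 3 1) + (-1) * c2 * (hs2 0 3 3 2) + (-1/2) * c3 * (hs2 0 3 3 3)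
  have hCp120 : (1) * c1 * w 0 1 1 2 + (1) * c2 * w 0 2 1 2 + (1) * c3 * w 0 3 1 2 = 0 := by
    linear_combination (1) * (hC 1 2 0) + (-1/2) * c0 * (hs2 1 2 0 0) + (-1) * c1 * (hsp 1 2 0 1) + (-1) * c2 * (hsp 1 2 0 2) + (-1) * c3 * (hsp 1 2 0 3)
  have hCp121 : (-1) * c0 * w 0 1 1 2 + (1) * c2 * w 1 2 1 2 + (1) * c3 * w 1 2 1 3 = 0 := by
    linear_combination (1) * (hC 1 2 1) + (-1) * c0 * (hs2 1 2 1 0) + (1) * c0 * (hsp 1 2 0 1) + (-1/2) * c1 * (hs2 1 2 1 1)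
  have hCp122 : (-1) * c0 * w 0 2 1 2 + (-1) * c1 * w 1 2 1 2 + (1) * c3 * w 1 2 2 3 = 0 := by
    linear_combination (1) * (hC 1 2 2) + (-1) * c0 * (hs2 1 2 2 0) + (1) * c0 * (hsp 1 2 0 2) + (-1) * c1 * (hs2 1 2 2 1) + (-1/2) * c2 * (hs2 1 2 2 2)
  have hCp123 : (-1) * c0 * w 0 3 1 2 + (-1) * c1 * w 1 2 1 3 + (-1) * c2 * w 1 2 2 3 = 0 := by
    linear_combination (1) * (hC 1 2 3) + (-1) * c0 * (hs2 1 2 3 0) + (1) * c0 * (hsp 1 2 0 3) + (-1) * c1 * (hs2 1 2 3 1) + (-1) * c2 * (hs2 1 2 3 2) + (-1/2) * c3 * (hs2 1 2 3 3)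
  have hCp130 : (1) * c1 * w 0 1 1 3 + (1) * c2 * w 0 2 1 3 + (1) * c3 * w 0 3 1 3 = 0 := by
    linear_combination (1) * (hC 1 3 0) + (-1/2) * c0 * (hs2 1 3 0 0) + (-1) * c1 * (hsp 1 3 0 1) + (-1) * c2 * (hsp 1 3 0 2) + (-1) * c3 * (hsp 1 3 0 3)
  have hCp131 : (-1) * c0 * w 0 1 1 3 + (1) * c2 * w 1 2 1 3 + (1) * c3 * w 1 3 1 3 = 0 := by
    linear_combination (1) * (hC 1 3 1) + (-1) * c0 * (hs2 1 3 1 0) + (1) * c0 * (hsp 1 3 0 1) + (-1/2) * c1 * (hs2 1 3 1 1) + (-1) * c2 * (hsp 1 3 1 2)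
  have hCp132 : (-1) * c0 * w 0 2 1 3 + (-1) * c1 * w 1 2 1 3 + (1) * c3 * w 1 3 2 3 = 0 := by
    linear_combination (1) * (hC 1 3 2) + (-1) * c0 * (hs2 1 3 2 0) + (1) * c0 * (hsp 1 3 0 2) + (-1) * c1 * (hs2 1 3 2 1) + (1) * c1 * (hsp 1 3 1 2) + (-1/2) * c2 * (hs2 1 3 2 2)
  have hCp133 : (-1) * c0 * w 0 3 1 3 + (-1) * c1 * w 1 3 1 3 + (-1) * c2 * w 1 3 2 3 = 0 := by
    linear_combination (1) * (hC 1 3 3) + (-1) * c0 * (hs2 1 3 3 0) + (1) * c0 * (hsp 1 3 0 3) + (-1) * c1 * (hs2 1 3 3 1) + (-1) * c2 * (hs2 1 3 3 2) + (-1/2) * c3 * (hs2 1 3 3 3)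
  have hCp230 : (1) * c1 * w 0 1 2 3 + (1) * c2 * w 0 2 2 3 + (1) * c3 * w 0 3 2 3 = 0 := by
    linear_combination (1) * (hC 2 3 0) + (-1/2) * c0 * (hs2 2 3 0 0) + (-1) * c1 * (hsp 2 3 0 1) + (-1) * c2 * (hsp 2 3 0 2) + (-1) * c3 * (hsp 2 3 0 3)
  have hCp231 : (-1) * c0 * w 0 1 2 3 + (1) * c2 * w 1 2 2 3 + (1) * c3 * w 1 3 2 3 = 0 := by
    linear_combination (1) * (hC 2 3 1) + (-1) * c0 * (hs2 2 3 1 0) + (1) * c0 * (hsp 2 3 0 1) + (-1/2) * c1 * (hs2 2 3 1 1) + (-1) * c2 * (hsp 2 3 1 2) + (-1) * c3 * (hsp 2 3 1 3)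
  have hCp232 : (-1) * c0 * w 0 2 2 3 + (-1) * c1 * w 1 2 2 3 + (1) * c3 * w 2 3 2 3 = 0 := by
    linear_combination (1) * (hC 2 3 2) + (-1) * c0 * (hs2 2 3 2 0) + (1) * c0 * (hsp 2 3 0 2) + (-1) * c1 * (hs2 2 3 2 1) + (1) * c1 * (hsp 2 3 1 2) + (-1/2) * c2 * (hs2 2 3 2 2)
  have hCp233 : (-1) * c0 * w 0 3 2 3 + (-1) * c1 * w 1 3 2 3 + (-1) * c2 * w 2 3 2 3 = 0 := by
    linear_combination (1) * (hC 2 3 3) + (-1) * c0 * (hs2 2 3 3 0) + (1) * c0 * (hsp 2 3 0 3) + (-1) * c1 * (hs2 2 3 3 1) + (1) * c1 * (hsp 2 3 1 3) + (-1) * c2 * (hs2 2 3 3 2) + (-1/2) * c3 * (hs2 2 3 3 3)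
  have hTp00 : (1) * w 0 1 0 1 + (1) * w 0 2 0 2 + (-1) * w 0 3 0 3 = 0 := by
    linear_combination (1) * (hT 0 0) + (-1/2) * (hs1 0 0 0 0) + (-1) * (hs1 1 0 1 0) + (1) * (hs2 0 1 1 0) + (-1) * (hs1 2 0 2 0) + (1) * (hs2 0 2 2 0) + (1) * (hs1 3 0 3 0) + (-1) * (hs2 0 3 3 0)
  have hTp01 : (1) * w 0 2 1 2 + (-1) * w 0 3 1 3 = 0 := by
    linear_combination (1) * (hT 0 1) + (-1/2) * (hs1 0 0 0 1) + (-1/2) * (hs2 1 0 1 1) + (-1) * (hs1 2 0 2 1) + (1) * (hs2 0 2 2 1) + (1) * (hs1 3 0 3 1) + (-1) * (hs2 0 3 3 1)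
  have hTp02 : (-1) * w 0 1 1 2 + (-1) * w 0 3 2 3 = 0 := by
    linear_combination (1) * (hT 0 2) + (-1/2) * (hs1 0 0 0 2) + (-1) * (hs1 1 0 1 2) + (-1/2) * (hs2 2 0 2 2) + (1) * (hs1 3 0 3 2) + (-1) * (hs2 0 3 3 2)
  have hTp03 : (-1) * w 0 1 1 3 + (-1) * w 0 2 2 3 = 0 := by
    linear_combination (1) * (hT 0 3) + (-1/2) * (hs1 0 0 0 3) + (-1) * (hs1 1 0 1 3) + (-1) * (hs1 2 0 2 3) + (1/2) * (hs2 3 0 3 3)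
  have hTp11 : (1) * w 0 1 0 1 + (1) * w 1 2 1 2 + (-1) * w 1 3 1 3 = 0 := by
    linear_combination (1) * (hT 1 1) + (-1/2) * (hs1 1 1 1 1) + (-1) * (hs1 2 1 2 1) + (1) * (hs2 1 2 2 1) + (1) * (hs1 3 1 3 1) + (-1) * (hs2 1 3 3 1)
  have hTp12 : (1) * w 0 1 0 2 + (-1) * w 1 3 2 3 = 0 := by
    linear_combination (1) * (hT 1 2) + (-1/2) * (hs1 1 1 1 2) + (-1/2) * (hs2 2 1 2 2) + (1) * (hs1 3 1 3 2) + (-1) * (hs2 1 3 3 2)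
  have hTp13 : (1) * w 0 1 0 3 + (-1) * w 1 2 2 3 = 0 := by
    linear_combination (1) * (hT 1 3) + (-1/2) * (hs1 1 1 1 3) + (-1) * (hs1 2 1 2 3) + (1/2) * (hs2 3 1 3 3)
  have hTp22 : (1) * w 0 2 0 2 + (1) * w 1 2 1 2 + (-1) * w 2 3 2 3 = 0 := by
    linear_combination (1) * (hT 2 2) + (-1/2) * (hs1 2 2 2 2) + (1) * (hs1 3 2 3 2) + (-1) * (hs2 2 3 3 2)
  have hTp23 : (1) * w 0 2 0 3 + (1) * w 1 2 1 3 = 0 := by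
    linear_combination (1) * (hT 2 3) + (-1/2) * (hs1 2 2 2 3) + (1/2) * (hs2 3 2 3 3)
  have hTp33 : (1) * w 0 3 0 3 + (1) * w 1 3 1 3 + (1) * w 2 3 2 3 = 0 := by
    linear_combination (1) * (hT 3 3) + (1/2) * (hs1 3 3 3 3)
  have hBp : (1) * w 0 1 2 3 + (-1) * w 0 2 1 3 + (1) * w 0 3 1 2 = 0 := by
    linear_combination (1) * (hB) + (-1) * (hs2 0 2 3 1)
  have z0101 : w 0 1 0 1 = 0 := by
    have h : (c0 ^ 2 + c1 ^ 2 + c2 ^ 2 - c3 ^ 2) * (w 0 1 0 1) = 0 := by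
      linear_combination (1/2) * c1 * (hCp010) + (-1/2) * c0 * (hCp011) + (1/2) * c2 * (hCp020) + (1/2) * c0 * (hCp022) + (-1/2) * c3 * (hCp030) + (-1/2) * c0 * (hCp033) + (1/2) * c2 * (hCp121) + (1/2) * c1 * (hCp122) + (-1/2) * c3 * (hCp131) + (-1/2) * c1 * (hCp133) + (1/2) * c3 * (hCp232) + (3/2) * c2 * (hCp233) + (-1/2) * c3 ^ 2 * (hTp00) + (1/2) * c2 ^ 2 * (hTp00) + (1/2) * c0 ^ 2 * (hTp00) + (1) * c0 * c1 * (hTp01) + (-1) * c0 * c2 * (hTp02) + (-1/2) * c3 ^ 2 * (hTp11) + (1/2) * c2 ^ 2 * (hTp11) + (1/2) * c1 ^ 2 * (hTp11) + (-1) * c1 * c2 * (hTp12) + (1/2) * c3 ^ 2 * (hTp22) + (-1) * c2 ^ 2 * (hTp22) + (1/2) * c2 ^ 2 * (hTp33)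
    exact (mul_eq_zero.mp h).resolve_left hQ
  have z0102 : w 0 1 0 2 = 0 := by
    have h : (c0 ^ 2 + c1 ^ 2 + c2 ^ 2 - c3 ^ 2) * (w 0 1 0 2) = 0 := by
      linear_combination (-1) * c0 * (hCp021) + (-1) * c1 * (hCp121) + (-1) * c3 * (hCp132) + (-1) * c2 * (hCp133) + (-1) * c1 * (hCp233) + (-1/2) * c1 * c2 * (hTp00) + (1) * c0 * c2 * (hTp01) + (1) * c0 * c1 * (hTp02) + (1/2) * c1 * c2 * (hTp11) + (-1) * c3 ^ 2 * (hTp12) + (1) * c2 ^ 2 * (hTp12) + (1) * c1 ^ 2 * (hTp12) + (1/2) * c1 * c2 * (hTp22) + (-1/2) * c1 * c2 * (hTp33)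
    exact (mul_eq_zero.mp h).resolve_left hQ
  have z0103 : w 0 1 0 3 = 0 := by
    have h : (c0 ^ 2 + c1 ^ 2 + c2 ^ 2 - c3 ^ 2) * (w 0 1 0 3) = 0 := by
      linear_combination (-1) * c3 * (hCp010) + (1/2) * c1 * (hCp030) + (-1) * c0 * (hCp031) + (-1) * c2 * (hCp123) + (1) * c0 * (hCp130) + (1/2) * c1 * (hCp131) + (1) * c2 * (hCp132) + (-1/2) * c1 * (hCp232) + (1/2) * c1 * c3 * (hTp00) + (1/2) * c0 * c1 * (hTp03) + (1/2) * c1 * c3 * (hTp11) + (1) * c2 * c3 * (hTp12) + (1) * c2 ^ 2 * (hTp13) + (1/2) * c1 ^ 2 * (hTp13) + (-1/2) * c1 * c3 * (hTp22) + (-1/2) * c1 * c2 * (hTp23)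
    exact (mul_eq_zero.mp h).resolve_left hQ
  have z0112 : w 0 1 1 2 = 0 := by
    have h : (c0 ^ 2 + c1 ^ 2 + c2 ^ 2 - c3 ^ 2) * (w 0 1 1 2) = 0 := by
      linear_combination (1) * c0 * (hCp020) + (1) * c3 * (hCp032) + (1) * c2 * (hCp033) + (1) * c1 * (hCp120) + (1) * c0 * (hCp233) + (-1/2) * c0 * c2 * (hTp00) + (-1) * c1 * c2 * (hTp01) + (1) * c3 ^ 2 * (hTp02) + (-1) * c2 ^ 2 * (hTp02) + (-1) * c0 ^ 2 * (hTp02) + (1/2) * c0 * c2 * (hTp11) + (-1) * c0 * c1 * (hTp12) + (-1/2) * c0 * c2 * (hTp22) + (1/2) * c0 * c2 * (hTp33)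
    exact (mul_eq_zero.mp h).resolve_left hQ
  have z0113 : w 0 1 1 3 = 0 := by
    have h : (c0 ^ 2 + c1 ^ 2 + c2 ^ 2 - c3 ^ 2) * (w 0 1 1 3) = 0 := by
      linear_combination (-1) * c3 * (hCp011) + (1) * c2 * (hCp023) + (-1/2) * c0 * (hCp030) + (-1) * c1 * (hCp031) + (-1) * c2 * (hCp032) + (1) * c1 * (hCp130) + (-1/2) * c0 * (hCp131) + (1/2) * c0 * (hCp232) + (-1/2) * c0 * c3 * (hTp00) + (-1) * c2 * c3 * (hTp02) + (-1) * c2 ^ 2 * (hTp03) + (-1/2) * c0 ^ 2 * (hTp03) + (-1/2) * c0 * c3 * (hTp11) + (-1/2) * c0 * c1 * (hTp13) + (1/2) * c0 * c3 * (hTp22) + (1/2) * c0 * c2 * (hTp23)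
    exact (mul_eq_zero.mp h).resolve_left hQ
  have z0123 : w 0 1 2 3 = 0 := by
    have h : (c0 ^ 2 + c1 ^ 2 + c2 ^ 2 - c3 ^ 2) * (w 0 1 2 3) = 0 := by
      linear_combination (-1) * c3 * (hCp012) + (-1) * c2 * (hCp013) + (1) * c1 * (hCp230) + (-1) * c0 * (hCp231) + (1) * c1 * c3 * (hTp02) + (1) * c1 * c2 * (hTp03) + (-1) * c0 * c3 * (hTp12) + (-1) * c0 * c2 * (hTp13)
    exact (mul_eq_zero.mp h).resolve_left hQ
  have z0202 : w 0 2 0 2 = 0 := by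
    have h : (c0 ^ 2 + c1 ^ 2 + c2 ^ 2 - c3 ^ 2) * (w 0 2 0 2) = 0 := by
      linear_combination (1/2) * c1 * (hCp010) + (1/2) * c0 * (hCp011) + (1/2) * c2 * (hCp020) + (-1/2) * c0 * (hCp022) + (-1/2) * c3 * (hCp030) + (-1/2) * c0 * (hCp033) + (-1/2) * c2 * (hCp121) + (-1/2) * c1 * (hCp122) + (1/2) * c3 * (hCp131) + (3/2) * c1 * (hCp133) + (-1/2) * c3 * (hCp232) + (-1/2) * c2 * (hCp233) + (-1/2) * c3 ^ 2 * (hTp00) + (1/2) * c1 ^ 2 * (hTp00) + (1/2) * c0 ^ 2 * (hTp00) + (-1) * c0 * c1 * (hTp01) + (1) * c0 * c2 * (hTp02) + (1/2) * c3 ^ 2 * (hTp11) + (-1) * c1 ^ 2 * (hTp11) + (-1) * c1 * c2 * (hTp12) + (-1/2) * c3 ^ 2 * (hTp22) + (1/2) * c2 ^ 2 * (hTp22) + (1/2) * c1 ^ 2 * (hTp22) + (1/2) * c1 ^ 2 * (hTp33)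
    exact (mul_eq_zero.mp h).resolve_left hQ
  have z0203 : w 0 2 0 3 = 0 := by
    have h : (c0 ^ 2 + c1 ^ 2 + c2 ^ 2 - c3 ^ 2) * (w 0 2 0 3) = 0 := by
      linear_combination (-1) * c3 * (hCp020) + (-1) * c0 * (hCp023) + (1/2) * c2 * (hCp030) + (-1/2) * c2 * (hCp131) + (1) * c1 * (hCp132) + (1/2) * c2 * (hCp232) + (1/2) * c2 * c3 * (hTp00) + (1/2) * c0 * c2 * (hTp03) + (-1/2) * c2 * c3 * (hTp11) + (1) * c1 * c3 * (hTp12) + (-1/2) * c1 * c2 * (hTp13) + (1/2) * c2 * c3 * (hTp22) + (1/2) * c2 ^ 2 * (hTp23) + (1) * c1 ^ 2 * (hTp23)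
    exact (mul_eq_zero.mp h).resolve_left hQ
  have z0212 : w 0 2 1 2 = 0 := by
    have h : (c0 ^ 2 + c1 ^ 2 + c2 ^ 2 - c3 ^ 2) * (w 0 2 1 2) = 0 := by
      linear_combination (-1) * c0 * (hCp010) + (-1) * c3 * (hCp031) + (-1) * c1 * (hCp033) + (1) * c2 * (hCp120) + (-1) * c0 * (hCp133) + (1/2) * c0 * c1 * (hTp00) + (-1) * c3 ^ 2 * (hTp01) + (1) * c1 ^ 2 * (hTp01) + (1) * c0 ^ 2 * (hTp01) + (1) * c1 * c2 * (hTp02) + (1/2) * c0 * c1 * (hTp11) + (1) * c0 * c2 * (hTp12) + (-1/2) * c0 * c1 * (hTp22) + (-1/2) * c0 * c1 * (hTp33)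
    exact (mul_eq_zero.mp h).resolve_left hQ
  have z0213 : w 0 2 1 3 = 0 := by
    have h : (c0 ^ 2 + c1 ^ 2 + c2 ^ 2 - c3 ^ 2) * (w 0 2 1 3) = 0 := by
      linear_combination (-1) * c3 * (hCp021) + (-1) * c1 * (hCp023) + (1) * c2 * (hCp130) + (-1) * c0 * (hCp132) + (1) * c2 * c3 * (hTp01) + (1) * c1 * c2 * (hTp03) + (-1) * c0 * c3 * (hTp12) + (-1) * c0 * c1 * (hTp23)
    exact (mul_eq_zero.mp h).resolve_left hQ
  have z0223 : w 0 2 2 3 = 0 := by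
    have h : (c0 ^ 2 + c1 ^ 2 + c2 ^ 2 - c3 ^ 2) * (w 0 2 2 3) = 0 := by
      linear_combination (-1) * c3 * (hCp022) + (-1) * c2 * (hCp023) + (-1/2) * c0 * (hCp030) + (-1) * c1 * (hCp130) + (1/2) * c0 * (hCp131) + (-1/2) * c0 * (hCp232) + (-1/2) * c0 * c3 * (hTp00) + (-1) * c1 * c3 * (hTp01) + (-1) * c1 ^ 2 * (hTp03) + (-1/2) * c0 ^ 2 * (hTp03) + (1/2) * c0 * c3 * (hTp11) + (1/2) * c0 * c1 * (hTp13) + (-1/2) * c0 * c3 * (hTp22) + (-1/2) * c0 * c2 * (hTp23)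
    exact (mul_eq_zero.mp h).resolve_left hQ
  have z0303 : w 0 3 0 3 = 0 := by
    have h : (c0 ^ 2 + c1 ^ 2 + c2 ^ 2 - c3 ^ 2) * (w 0 3 0 3) = 0 := by
      linear_combination (1) * c1 * (hCp010) + (1) * c2 * (hCp020) + (-1) * c3 * (hCp030) + (-1) * c0 * (hCp033) + (1) * c1 * (hCp133) + (1) * c2 * (hCp233) + (-1/2) * c2 ^ 2 * (hTp00) + (-1/2) * c1 ^ 2 * (hTp00) + (1/2) * c2 ^ 2 * (hTp11) + (-1/2) * c1 ^ 2 * (hTp11) + (-2) * c1 * c2 * (hTp12) + (-1/2) * c2 ^ 2 * (hTp22) + (1/2) * c1 ^ 2 * (hTp22) + (1/2) * c2 ^ 2 * (hTp33) + (1/2) * c1 ^ 2 * (hTp33)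
    exact (mul_eq_zero.mp h).resolve_left hQ
  have z0312 : w 0 3 1 2 = 0 := by
    have h : (c0 ^ 2 + c1 ^ 2 + c2 ^ 2 - c3 ^ 2) * (w 0 3 1 2) = 0 := by
      linear_combination (1) * c2 * (hCp031) + (-1) * c1 * (hCp032) + (-1) * c3 * (hCp120) + (-1) * c0 * (hCp123) + (1) * c2 * c3 * (hTp01) + (-1) * c1 * c3 * (hTp02) + (1) * c0 * c2 * (hTp13) + (-1) * c0 * c1 * (hTp23)
    exact (mul_eq_zero.mp h).resolve_left hQ
  have z0313 : w 0 3 1 3 = 0 := by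
    have h : (c0 ^ 2 + c1 ^ 2 + c2 ^ 2 - c3 ^ 2) * (w 0 3 1 3) = 0 := by
      linear_combination (-1) * c0 * (hCp010) + (-1) * c3 * (hCp031) + (-1) * c1 * (hCp033) + (1) * c2 * (hCp120) + (-1) * c0 * (hCp133) + (1/2) * c0 * c1 * (hTp00) + (-1) * c2 ^ 2 * (hTp01) + (1) * c1 * c2 * (hTp02) + (1/2) * c0 * c1 * (hTp11) + (1) * c0 * c2 * (hTp12) + (-1/2) * c0 * c1 * (hTp22) + (-1/2) * c0 * c1 * (hTp33)
    exact (mul_eq_zero.mp h).resolve_left hQ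
  have z0323 : w 0 3 2 3 = 0 := by
    have h : (c0 ^ 2 + c1 ^ 2 + c2 ^ 2 - c3 ^ 2) * (w 0 3 2 3) = 0 := by
      linear_combination (-1) * c0 * (hCp020) + (-1) * c3 * (hCp032) + (-1) * c2 * (hCp033) + (-1) * c1 * (hCp120) + (-1) * c0 * (hCp233) + (1/2) * c0 * c2 * (hTp00) + (1) * c1 * c2 * (hTp01) + (-1) * c1 ^ 2 * (hTp02) + (-1/2) * c0 * c2 * (hTp11) + (1) * c0 * c1 * (hTp12) + (1/2) * c0 * c2 * (hTp22) + (-1/2) * c0 * c2 * (hTp33)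
    exact (mul_eq_zero.mp h).resolve_left hQ
  have z1212 : w 1 2 1 2 = 0 := by
    have h : (c0 ^ 2 + c1 ^ 2 + c2 ^ 2 - c3 ^ 2) * (w 1 2 1 2) = 0 := by
      linear_combination (-1/2) * c1 * (hCp010) + (-1/2) * c0 * (hCp011) + (-1/2) * c2 * (hCp020) + (-1/2) * c0 * (hCp022) + (1/2) * c3 * (hCp030) + (3/2) * c0 * (hCp033) + (1/2) * c2 * (hCp121) + (-1/2) * c1 * (hCp122) + (-1/2) * c3 * (hCp131) + (-1/2) * c1 * (hCp133) + (-1/2) * c3 * (hCp232) + (-1/2) * c2 * (hCp233) + (1/2) * c3 ^ 2 * (hTp00) + (-1) * c0 ^ 2 * (hTp00) + (-1) * c0 * c1 * (hTp01) + (-1) * c0 * c2 * (hTp02) + (-1/2) * c3 ^ 2 * (hTp11) + (1/2) * c1 ^ 2 * (hTp11) + (1/2) * c0 ^ 2 * (hTp11) + (1) * c1 * c2 * (hTp12) + (-1/2) * c3 ^ 2 * (hTp22) + (1/2) * c2 ^ 2 * (hTp22) + (1/2) * c0 ^ 2 * (hTp22) + (1/2) * c0 ^ 2 * (hTp33)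
    exact (mul_eq_zero.mp h).resolve_left hQ
  have z1213 : w 1 2 1 3 = 0 := by
    have h : (c0 ^ 2 + c1 ^ 2 + c2 ^ 2 - c3 ^ 2) * (w 1 2 1 3) = 0 := by
      linear_combination (-1/2) * c2 * (hCp030) + (1) * c0 * (hCp032) + (-1) * c3 * (hCp121) + (-1) * c1 * (hCp123) + (1/2) * c2 * (hCp131) + (1/2) * c2 * (hCp232) + (-1/2) * c2 * c3 * (hTp00) + (1) * c0 * c3 * (hTp02) + (-1/2) * c0 * c2 * (hTp03) + (1/2) * c2 * c3 * (hTp11) + (1/2) * c1 * c2 * (hTp13) + (1/2) * c2 * c3 * (hTp22) + (1/2) * c2 ^ 2 * (hTp23) + (1) * c0 ^ 2 * (hTp23)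
    exact (mul_eq_zero.mp h).resolve_left hQ
  have z1223 : w 1 2 2 3 = 0 := by
    have h : (c0 ^ 2 + c1 ^ 2 + c2 ^ 2 - c3 ^ 2) * (w 1 2 2 3) = 0 := by
      linear_combination (1/2) * c1 * (hCp030) + (-1) * c0 * (hCp031) + (-1) * c3 * (hCp122) + (-1) * c2 * (hCp123) + (-1/2) * c1 * (hCp131) + (-1/2) * c1 * (hCp232) + (1/2) * c1 * c3 * (hTp00) + (-1) * c0 * c3 * (hTp01) + (1/2) * c0 * c1 * (hTp03) + (-1/2) * c1 * c3 * (hTp11) + (-1/2) * c1 ^ 2 * (hTp13) + (-1) * c0 ^ 2 * (hTp13) + (-1/2) * c1 * c3 * (hTp22) + (-1/2) * c1 * c2 * (hTp23)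
    exact (mul_eq_zero.mp h).resolve_left hQ
  have z1313 : w 1 3 1 3 = 0 := by
    have h : (c0 ^ 2 + c1 ^ 2 + c2 ^ 2 - c3 ^ 2) * (w 1 3 1 3) = 0 := by
      linear_combination (-1) * c0 * (hCp011) + (1) * c0 * (hCp033) + (1) * c2 * (hCp121) + (-1) * c3 * (hCp131) + (-1) * c1 * (hCp133) + (1) * c2 * (hCp233) + (1/2) * c2 ^ 2 * (hTp00) + (-1/2) * c0 ^ 2 * (hTp00) + (-2) * c0 * c2 * (hTp02) + (-1/2) * c2 ^ 2 * (hTp11) + (-1/2) * c0 ^ 2 * (hTp11) + (-1/2) * c2 ^ 2 * (hTp22) + (1/2) * c0 ^ 2 * (hTp22) + (1/2) * c2 ^ 2 * (hTp33) + (1/2) * c0 ^ 2 * (hTp33)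
    exact (mul_eq_zero.mp h).resolve_left hQ
  have z1323 : w 1 3 2 3 = 0 := by
    have h : (c0 ^ 2 + c1 ^ 2 + c2 ^ 2 - c3 ^ 2) * (w 1 3 2 3) = 0 := by
      linear_combination (-1) * c0 * (hCp021) + (-1) * c1 * (hCp121) + (-1) * c3 * (hCp132) + (-1) * c2 * (hCp133) + (-1) * c1 * (hCp233) + (-1/2) * c1 * c2 * (hTp00) + (1) * c0 * c2 * (hTp01) + (1) * c0 * c1 * (hTp02) + (1/2) * c1 * c2 * (hTp11) + (-1) * c0 ^ 2 * (hTp12) + (1/2) * c1 * c2 * (hTp22) + (-1/2) * c1 * c2 * (hTp33)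
    exact (mul_eq_zero.mp h).resolve_left hQ
  have z2323 : w 2 3 2 3 = 0 := by
    have h : (c0 ^ 2 + c1 ^ 2 + c2 ^ 2 - c3 ^ 2) * (w 2 3 2 3) = 0 := by
      linear_combination (-1) * c0 * (hCp022) + (1) * c0 * (hCp033) + (-1) * c1 * (hCp122) + (1) * c1 * (hCp133) + (-1) * c3 * (hCp232) + (-1) * c2 * (hCp233) + (1/2) * c1 ^ 2 * (hTp00) + (-1/2) * c0 ^ 2 * (hTp00) + (-2) * c0 * c1 * (hTp01) + (-1/2) * c1 ^ 2 * (hTp11) + (1/2) * c0 ^ 2 * (hTp11) + (-1/2) * c1 ^ 2 * (hTp22) + (-1/2) * c0 ^ 2 * (hTp22) + (1/2) * c1 ^ 2 * (hTp33) + (1/2) * c0 ^ 2 * (hTp33)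
    exact (mul_eq_zero.mp h).resolve_left hQ
  have kk0000 : w 0 0 0 0 = 0 := by linear_combination (1/2) * (hs1 0 0 0 0)
  have kk0001 : w 0 0 0 1 = 0 := by linear_combination (1/2) * (hs1 0 0 0 1)
  have kk0002 : w 0 0 0 2 = 0 := by linear_combination (1/2) * (hs1 0 0 0 2)
  have kk0003 : w 0 0 0 3 = 0 := by linear_combination (1/2) * (hs1 0 0 0 3)
  have kk0010 : w 0 0 1 0 = 0 := by linear_combination (1/2) * (hs1 0 0 1 0)
  have kk0011 : w 0 0 1 1 = 0 := by linear_combination (1/2) * (hs1 0 0 1 1)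
  have kk0012 : w 0 0 1 2 = 0 := by linear_combination (1/2) * (hs1 0 0 1 2)
  have kk0013 : w 0 0 1 3 = 0 := by linear_combination (1/2) * (hs1 0 0 1 3)
  have kk0020 : w 0 0 2 0 = 0 := by linear_combination (1/2) * (hs1 0 0 2 0)
  have kk0021 : w 0 0 2 1 = 0 := by linear_combination (1/2) * (hs1 0 0 2 1)
  have kk0022 : w 0 0 2 2 = 0 := by linear_combination (1/2) * (hs1 0 0 2 2)
  have kk0023 : w 0 0 2 3 = 0 := by linear_combination (1/2) * (hs1 0 0 2 3)
  have kk0030 : w 0 0 3 0 = 0 := by linear_combination (1/2) * (hs1 0 0 3 0)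
  have kk0031 : w 0 0 3 1 = 0 := by linear_combination (1/2) * (hs1 0 0 3 1)
  have kk0032 : w 0 0 3 2 = 0 := by linear_combination (1/2) * (hs1 0 0 3 2)
  have kk0033 : w 0 0 3 3 = 0 := by linear_combination (1/2) * (hs1 0 0 3 3)
  have kk0100 : w 0 1 0 0 = 0 := by linear_combination (1/2) * (hs2 0 1 0 0)
  have kk0101 : w 0 1 0 1 = 0 := z0101
  have kk0102 : w 0 1 0 2 = 0 := z0102
  have kk0103 : w 0 1 0 3 = 0 := z0103
  have kk0110 : w 0 1 1 0 = 0 := by linear_combination (-1) * (z0101) + (1) * (hs2 0 1 1 0)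
  have kk0111 : w 0 1 1 1 = 0 := by linear_combination (1/2) * (hs2 0 1 1 1)
  have kk0112 : w 0 1 1 2 = 0 := z0112
  have kk0113 : w 0 1 1 3 = 0 := z0113
  have kk0120 : w 0 1 2 0 = 0 := by linear_combination (-1) * (z0102) + (1) * (hs2 0 1 2 0)
  have kk0121 : w 0 1 2 1 = 0 := by linear_combination (-1) * (z0112) + (1) * (hs2 0 1 2 1)
  have kk0122 : w 0 1 2 2 = 0 := by linear_combination (1/2) * (hs2 0 1 2 2)
  have kk0123 : w 0 1 2 3 = 0 := z0123
  have kk0130 : w 0 1 3 0 = 0 := by linear_combination (-1) * (z0103) + (1) * (hs2 0 1 3 0)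
  have kk0131 : w 0 1 3 1 = 0 := by linear_combination (-1) * (z0113) + (1) * (hs2 0 1 3 1)
  have kk0132 : w 0 1 3 2 = 0 := by linear_combination (-1) * (z0123) + (1) * (hs2 0 1 3 2)
  have kk0133 : w 0 1 3 3 = 0 := by linear_combination (1/2) * (hs2 0 1 3 3)
  have kk0200 : w 0 2 0 0 = 0 := by linear_combination (1/2) * (hs2 0 2 0 0)
  have kk0201 : w 0 2 0 1 = 0 := by linear_combination (1) * (z0102) + (1) * (hsp 0 2 0 1)
  have kk0202 : w 0 2 0 2 = 0 := z0202
  have kk0203 : w 0 2 0 3 = 0 := z0203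
  have kk0210 : w 0 2 1 0 = 0 := by linear_combination (-1) * (z0102) + (1) * (hs2 0 2 1 0) + (-1) * (hsp 0 2 0 1)
  have kk0211 : w 0 2 1 1 = 0 := by linear_combination (1/2) * (hs2 0 2 1 1)
  have kk0212 : w 0 2 1 2 = 0 := z0212
  have kk0213 : w 0 2 1 3 = 0 := z0213
  have kk0220 : w 0 2 2 0 = 0 := by linear_combination (-1) * (z0202) + (1) * (hs2 0 2 2 0)
  have kk0221 : w 0 2 2 1 = 0 := by linear_combination (-1) * (z0212) + (1) * (hs2 0 2 2 1)
  have kk0222 : w 0 2 2 2 = 0 := by linear_combination (1/2) * (hs2 0 2 2 2)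
  have kk0223 : w 0 2 2 3 = 0 := z0223
  have kk0230 : w 0 2 3 0 = 0 := by linear_combination (-1) * (z0203) + (1) * (hs2 0 2 3 0)
  have kk0231 : w 0 2 3 1 = 0 := by linear_combination (-1) * (z0213) + (1) * (hs2 0 2 3 1)
  have kk0232 : w 0 2 3 2 = 0 := by linear_combination (-1) * (z0223) + (1) * (hs2 0 2 3 2)
  have kk0233 : w 0 2 3 3 = 0 := by linear_combination (1/2) * (hs2 0 2 3 3)
  have kk0300 : w 0 3 0 0 = 0 := by linear_combination (1/2) * (hs2 0 3 0 0)
  have kk0301 : w 0 3 0 1 = 0 := by linear_combination (1) * (z0103) + (1) * (hsp 0 3 0 1)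
  have kk0302 : w 0 3 0 2 = 0 := by linear_combination (1) * (z0203) + (1) * (hsp 0 3 0 2)
  have kk0303 : w 0 3 0 3 = 0 := z0303
  have kk0310 : w 0 3 1 0 = 0 := by linear_combination (-1) * (z0103) + (1) * (hs2 0 3 1 0) + (-1) * (hsp 0 3 0 1)
  have kk0311 : w 0 3 1 1 = 0 := by linear_combination (1/2) * (hs2 0 3 1 1)
  have kk0312 : w 0 3 1 2 = 0 := z0312
  have kk0313 : w 0 3 1 3 = 0 := z0313
  have kk0320 : w 0 3 2 0 = 0 := by linear_combination (-1) * (z0203) + (1) * (hs2 0 3 2 0) + (-1) * (hsp 0 3 0 2)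
  have kk0321 : w 0 3 2 1 = 0 := by linear_combination (-1) * (z0312) + (1) * (hs2 0 3 2 1)
  have kk0322 : w 0 3 2 2 = 0 := by linear_combination (1/2) * (hs2 0 3 2 2)
  have kk0323 : w 0 3 2 3 = 0 := z0323
  have kk0330 : w 0 3 3 0 = 0 := by linear_combination (-1) * (z0303) + (1) * (hs2 0 3 3 0)
  have kk0331 : w 0 3 3 1 = 0 := by linear_combination (-1) * (z0313) + (1) * (hs2 0 3 3 1)
  have kk0332 : w 0 3 3 2 = 0 := by linear_combination (-1) * (z0323) + (1) * (hs2 0 3 3 2)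
  have kk0333 : w 0 3 3 3 = 0 := by linear_combination (1/2) * (hs2 0 3 3 3)
  have kk1000 : w 1 0 0 0 = 0 := by linear_combination (1/2) * (hs2 1 0 0 0)
  have kk1001 : w 1 0 0 1 = 0 := by linear_combination (-1) * (z0101) + (1) * (hs1 1 0 0 1)
  have kk1002 : w 1 0 0 2 = 0 := by linear_combination (-1) * (z0102) + (1) * (hs1 1 0 0 2)
  have kk1003 : w 1 0 0 3 = 0 := by linear_combination (-1) * (z0103) + (1) * (hs1 1 0 0 3)
  have kk1010 : w 1 0 1 0 = 0 := by linear_combination (1) * (z0101) + (1) * (hs1 1 0 1 0) + (-1) * (hs2 0 1 1 0)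
  have kk1011 : w 1 0 1 1 = 0 := by linear_combination (1/2) * (hs2 1 0 1 1)
  have kk1012 : w 1 0 1 2 = 0 := by linear_combination (-1) * (z0112) + (1) * (hs1 1 0 1 2)
  have kk1013 : w 1 0 1 3 = 0 := by linear_combination (-1) * (z0113) + (1) * (hs1 1 0 1 3)
  have kk1020 : w 1 0 2 0 = 0 := by linear_combination (1) * (z0102) + (1) * (hs1 1 0 2 0) + (-1) * (hs2 0 1 2 0)
  have kk1021 : w 1 0 2 1 = 0 := by linear_combination (1) * (z0112) + (1) * (hs1 1 0 2 1) + (-1) * (hs2 0 1 2 1)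
  have kk1022 : w 1 0 2 2 = 0 := by linear_combination (1/2) * (hs2 1 0 2 2)
  have kk1023 : w 1 0 2 3 = 0 := by linear_combination (-1) * (z0123) + (1) * (hs1 1 0 2 3)
  have kk1030 : w 1 0 3 0 = 0 := by linear_combination (1) * (z0103) + (1) * (hs1 1 0 3 0) + (-1) * (hs2 0 1 3 0)
  have kk1031 : w 1 0 3 1 = 0 := by linear_combination (1) * (z0113) + (1) * (hs1 1 0 3 1) + (-1) * (hs2 0 1 3 1)
  have kk1032 : w 1 0 3 2 = 0 := by linear_combination (1) * (z0123) + (1) * (hs1 1 0 3 2) + (-1) * (hs2 0 1 3 2)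
  have kk1033 : w 1 0 3 3 = 0 := by linear_combination (1/2) * (hs2 1 0 3 3)
  have kk1100 : w 1 1 0 0 = 0 := by linear_combination (1/2) * (hs1 1 1 0 0)
  have kk1101 : w 1 1 0 1 = 0 := by linear_combination (1/2) * (hs1 1 1 0 1)
  have kk1102 : w 1 1 0 2 = 0 := by linear_combination (1/2) * (hs1 1 1 0 2)
  have kk1103 : w 1 1 0 3 = 0 := by linear_combination (1/2) * (hs1 1 1 0 3)
  have kk1110 : w 1 1 1 0 = 0 := by linear_combination (1/2) * (hs1 1 1 1 0)
  have kk1111 : w 1 1 1 1 = 0 := by linear_combination (1/2) * (hs1 1 1 1 1)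
  have kk1112 : w 1 1 1 2 = 0 := by linear_combination (1/2) * (hs1 1 1 1 2)
  have kk1113 : w 1 1 1 3 = 0 := by linear_combination (1/2) * (hs1 1 1 1 3)
  have kk1120 : w 1 1 2 0 = 0 := by linear_combination (1/2) * (hs1 1 1 2 0)
  have kk1121 : w 1 1 2 1 = 0 := by linear_combination (1/2) * (hs1 1 1 2 1)
  have kk1122 : w 1 1 2 2 = 0 := by linear_combination (1/2) * (hs1 1 1 2 2)
  have kk1123 : w 1 1 2 3 = 0 := by linear_combination (1/2) * (hs1 1 1 2 3)
  have kk1130 : w 1 1 3 0 = 0 := by linear_combination (1/2) * (hs1 1 1 3 0)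
  have kk1131 : w 1 1 3 1 = 0 := by linear_combination (1/2) * (hs1 1 1 3 1)
  have kk1132 : w 1 1 3 2 = 0 := by linear_combination (1/2) * (hs1 1 1 3 2)
  have kk1133 : w 1 1 3 3 = 0 := by linear_combination (1/2) * (hs1 1 1 3 3)
  have kk1200 : w 1 2 0 0 = 0 := by linear_combination (1/2) * (hs2 1 2 0 0)
  have kk1201 : w 1 2 0 1 = 0 := by linear_combination (1) * (z0112) + (1) * (hsp 1 2 0 1)
  have kk1202 : w 1 2 0 2 = 0 := by linear_combination (1) * (z0212) + (1) * (hsp 1 2 0 2)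
  have kk1203 : w 1 2 0 3 = 0 := by linear_combination (1) * (z0312) + (1) * (hsp 1 2 0 3)
  have kk1210 : w 1 2 1 0 = 0 := by linear_combination (-1) * (z0112) + (1) * (hs2 1 2 1 0) + (-1) * (hsp 1 2 0 1)
  have kk1211 : w 1 2 1 1 = 0 := by linear_combination (1/2) * (hs2 1 2 1 1)
  have kk1212 : w 1 2 1 2 = 0 := z1212
  have kk1213 : w 1 2 1 3 = 0 := z1213
  have kk1220 : w 1 2 2 0 = 0 := by linear_combination (-1) * (z0212) + (1) * (hs2 1 2 2 0) + (-1) * (hsp 1 2 0 2)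
  have kk1221 : w 1 2 2 1 = 0 := by linear_combination (-1) * (z1212) + (1) * (hs2 1 2 2 1)
  have kk1222 : w 1 2 2 2 = 0 := by linear_combination (1/2) * (hs2 1 2 2 2)
  have kk1223 : w 1 2 2 3 = 0 := z1223
  have kk1230 : w 1 2 3 0 = 0 := by linear_combination (-1) * (z0312) + (1) * (hs2 1 2 3 0) + (-1) * (hsp 1 2 0 3)
  have kk1231 : w 1 2 3 1 = 0 := by linear_combination (-1) * (z1213) + (1) * (hs2 1 2 3 1)
  have kk1232 : w 1 2 3 2 = 0 := by linear_combination (-1) * (z1223) + (1) * (hs2 1 2 3 2)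
  have kk1233 : w 1 2 3 3 = 0 := by linear_combination (1/2) * (hs2 1 2 3 3)
  have kk1300 : w 1 3 0 0 = 0 := by linear_combination (1/2) * (hs2 1 3 0 0)
  have kk1301 : w 1 3 0 1 = 0 := by linear_combination (1) * (z0113) + (1) * (hsp 1 3 0 1)
  have kk1302 : w 1 3 0 2 = 0 := by linear_combination (1) * (z0213) + (1) * (hsp 1 3 0 2)
  have kk1303 : w 1 3 0 3 = 0 := by linear_combination (1) * (z0313) + (1) * (hsp 1 3 0 3)
  have kk1310 : w 1 3 1 0 = 0 := by linear_combination (-1) * (z0113) + (1) * (hs2 1 3 1 0) + (-1) * (hsp 1 3 0 1)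
  have kk1311 : w 1 3 1 1 = 0 := by linear_combination (1/2) * (hs2 1 3 1 1)
  have kk1312 : w 1 3 1 2 = 0 := by linear_combination (1) * (z1213) + (1) * (hsp 1 3 1 2)
  have kk1313 : w 1 3 1 3 = 0 := z1313
  have kk1320 : w 1 3 2 0 = 0 := by linear_combination (-1) * (z0213) + (1) * (hs2 1 3 2 0) + (-1) * (hsp 1 3 0 2)
  have kk1321 : w 1 3 2 1 = 0 := by linear_combination (-1) * (z1213) + (1) * (hs2 1 3 2 1) + (-1) * (hsp 1 3 1 2)
  have kk1322 : w 1 3 2 2 = 0 := by linear_combination (1/2) * (hs2 1 3 2 2)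
  have kk1323 : w 1 3 2 3 = 0 := z1323
  have kk1330 : w 1 3 3 0 = 0 := by linear_combination (-1) * (z0313) + (1) * (hs2 1 3 3 0) + (-1) * (hsp 1 3 0 3)
  have kk1331 : w 1 3 3 1 = 0 := by linear_combination (-1) * (z1313) + (1) * (hs2 1 3 3 1)
  have kk1332 : w 1 3 3 2 = 0 := by linear_combination (-1) * (z1323) + (1) * (hs2 1 3 3 2)
  have kk1333 : w 1 3 3 3 = 0 := by linear_combination (1/2) * (hs2 1 3 3 3)
  have kk2000 : w 2 0 0 0 = 0 := by linear_combination (1/2) * (hs2 2 0 0 0)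
  have kk2001 : w 2 0 0 1 = 0 := by linear_combination (-1) * (z0102) + (1) * (hs1 2 0 0 1) + (-1) * (hsp 0 2 0 1)
  have kk2002 : w 2 0 0 2 = 0 := by linear_combination (-1) * (z0202) + (1) * (hs1 2 0 0 2)
  have kk2003 : w 2 0 0 3 = 0 := by linear_combination (-1) * (z0203) + (1) * (hs1 2 0 0 3)
  have kk2010 : w 2 0 1 0 = 0 := by linear_combination (1) * (z0102) + (1) * (hs1 2 0 1 0) + (-1) * (hs2 0 2 1 0) + (1) * (hsp 0 2 0 1)
  have kk2011 : w 2 0 1 1 = 0 := by linear_combination (1/2) * (hs2 2 0 1 1)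
  have kk2012 : w 2 0 1 2 = 0 := by linear_combination (-1) * (z0212) + (1) * (hs1 2 0 1 2)
  have kk2013 : w 2 0 1 3 = 0 := by linear_combination (-1) * (z0213) + (1) * (hs1 2 0 1 3)
  have kk2020 : w 2 0 2 0 = 0 := by linear_combination (1) * (z0202) + (1) * (hs1 2 0 2 0) + (-1) * (hs2 0 2 2 0)
  have kk2021 : w 2 0 2 1 = 0 := by linear_combination (1) * (z0212) + (1) * (hs1 2 0 2 1) + (-1) * (hs2 0 2 2 1)
  have kk2022 : w 2 0 2 2 = 0 := by linear_combination (1/2) * (hs2 2 0 2 2)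
  have kk2023 : w 2 0 2 3 = 0 := by linear_combination (-1) * (z0223) + (1) * (hs1 2 0 2 3)
  have kk2030 : w 2 0 3 0 = 0 := by linear_combination (1) * (z0203) + (1) * (hs1 2 0 3 0) + (-1) * (hs2 0 2 3 0)
  have kk2031 : w 2 0 3 1 = 0 := by linear_combination (1) * (z0213) + (1) * (hs1 2 0 3 1) + (-1) * (hs2 0 2 3 1)
  have kk2032 : w 2 0 3 2 = 0 := by linear_combination (1) * (z0223) + (1) * (hs1 2 0 3 2) + (-1) * (hs2 0 2 3 2)
  have kk2033 : w 2 0 3 3 = 0 := by linear_combination (1/2) * (hs2 2 0 3 3)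
  have kk2100 : w 2 1 0 0 = 0 := by linear_combination (1/2) * (hs2 2 1 0 0)
  have kk2101 : w 2 1 0 1 = 0 := by linear_combination (-1) * (z0112) + (1) * (hs1 2 1 0 1) + (-1) * (hsp 1 2 0 1)
  have kk2102 : w 2 1 0 2 = 0 := by linear_combination (-1) * (z0212) + (1) * (hs1 2 1 0 2) + (-1) * (hsp 1 2 0 2)
  have kk2103 : w 2 1 0 3 = 0 := by linear_combination (-1) * (z0312) + (1) * (hs1 2 1 0 3) + (-1) * (hsp 1 2 0 3)
  have kk2110 : w 2 1 1 0 = 0 := by linear_combination (1) * (z0112) + (1) * (hs1 2 1 1 0) + (-1) * (hs2 1 2 1 0) + (1) * (hsp 1 2 0 1)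
  have kk2111 : w 2 1 1 1 = 0 := by linear_combination (1/2) * (hs2 2 1 1 1)
  have kk2112 : w 2 1 1 2 = 0 := by linear_combination (-1) * (z1212) + (1) * (hs1 2 1 1 2)
  have kk2113 : w 2 1 1 3 = 0 := by linear_combination (-1) * (z1213) + (1) * (hs1 2 1 1 3)
  have kk2120 : w 2 1 2 0 = 0 := by linear_combination (1) * (z0212) + (1) * (hs1 2 1 2 0) + (-1) * (hs2 1 2 2 0) + (1) * (hsp 1 2 0 2)
  have kk2121 : w 2 1 2 1 = 0 := by linear_combination (1) * (z1212) + (1) * (hs1 2 1 2 1) + (-1) * (hs2 1 2 2 1)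
  have kk2122 : w 2 1 2 2 = 0 := by linear_combination (1/2) * (hs2 2 1 2 2)
  have kk2123 : w 2 1 2 3 = 0 := by linear_combination (-1) * (z1223) + (1) * (hs1 2 1 2 3)
  have kk2130 : w 2 1 3 0 = 0 := by linear_combination (1) * (z0312) + (1) * (hs1 2 1 3 0) + (-1) * (hs2 1 2 3 0) + (1) * (hsp 1 2 0 3)
  have kk2131 : w 2 1 3 1 = 0 := by linear_combination (1) * (z1213) + (1) * (hs1 2 1 3 1) + (-1) * (hs2 1 2 3 1)
  have kk2132 : w 2 1 3 2 = 0 := by linear_combination (1) * (z1223) + (1) * (hs1 2 1 3 2) + (-1) * (hs2 1 2 3 2)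
  have kk2133 : w 2 1 3 3 = 0 := by linear_combination (1/2) * (hs2 2 1 3 3)
  have kk2200 : w 2 2 0 0 = 0 := by linear_combination (1/2) * (hs1 2 2 0 0)
  have kk2201 : w 2 2 0 1 = 0 := by linear_combination (1/2) * (hs1 2 2 0 1)
  have kk2202 : w 2 2 0 2 = 0 := by linear_combination (1/2) * (hs1 2 2 0 2)
  have kk2203 : w 2 2 0 3 = 0 := by linear_combination (1/2) * (hs1 2 2 0 3)
  have kk2210 : w 2 2 1 0 = 0 := by linear_combination (1/2) * (hs1 2 2 1 0)
  have kk2211 : w 2 2 1 1 = 0 := by linear_combination (1/2) * (hs1 2 2 1 1)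
  have kk2212 : w 2 2 1 2 = 0 := by linear_combination (1/2) * (hs1 2 2 1 2)
  have kk2213 : w 2 2 1 3 = 0 := by linear_combination (1/2) * (hs1 2 2 1 3)
  have kk2220 : w 2 2 2 0 = 0 := by linear_combination (1/2) * (hs1 2 2 2 0)
  have kk2221 : w 2 2 2 1 = 0 := by linear_combination (1/2) * (hs1 2 2 2 1)
  have kk2222 : w 2 2 2 2 = 0 := by linear_combination (1/2) * (hs1 2 2 2 2)
  have kk2223 : w 2 2 2 3 = 0 := by linear_combination (1/2) * (hs1 2 2 2 3)
  have kk2230 : w 2 2 3 0 = 0 := by linear_combination (1/2) * (hs1 2 2 3 0)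
  have kk2231 : w 2 2 3 1 = 0 := by linear_combination (1/2) * (hs1 2 2 3 1)
  have kk2232 : w 2 2 3 2 = 0 := by linear_combination (1/2) * (hs1 2 2 3 2)
  have kk2233 : w 2 2 3 3 = 0 := by linear_combination (1/2) * (hs1 2 2 3 3)
  have kk2300 : w 2 3 0 0 = 0 := by linear_combination (1/2) * (hs2 2 3 0 0)
  have kk2301 : w 2 3 0 1 = 0 := by linear_combination (1) * (z0123) + (1) * (hsp 2 3 0 1)
  have kk2302 : w 2 3 0 2 = 0 := by linear_combination (1) * (z0223) + (1) * (hsp 2 3 0 2)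
  have kk2303 : w 2 3 0 3 = 0 := by linear_combination (1) * (z0323) + (1) * (hsp 2 3 0 3)
  have kk2310 : w 2 3 1 0 = 0 := by linear_combination (-1) * (z0123) + (1) * (hs2 2 3 1 0) + (-1) * (hsp 2 3 0 1)
  have kk2311 : w 2 3 1 1 = 0 := by linear_combination (1/2) * (hs2 2 3 1 1)
  have kk2312 : w 2 3 1 2 = 0 := by linear_combination (1) * (z1223) + (1) * (hsp 2 3 1 2)
  have kk2313 : w 2 3 1 3 = 0 := by linear_combination (1) * (z1323) + (1) * (hsp 2 3 1 3)
  have kk2320 : w 2 3 2 0 = 0 := by linear_combination (-1) * (z0223) + (1) * (hs2 2 3 2 0) + (-1) * (hsp 2 3 0 2)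
  have kk2321 : w 2 3 2 1 = 0 := by linear_combination (-1) * (z1223) + (1) * (hs2 2 3 2 1) + (-1) * (hsp 2 3 1 2)
  have kk2322 : w 2 3 2 2 = 0 := by linear_combination (1/2) * (hs2 2 3 2 2)
  have kk2323 : w 2 3 2 3 = 0 := z2323
  have kk2330 : w 2 3 3 0 = 0 := by linear_combination (-1) * (z0323) + (1) * (hs2 2 3 3 0) + (-1) * (hsp 2 3 0 3)
  have kk2331 : w 2 3 3 1 = 0 := by linear_combination (-1) * (z1323) + (1) * (hs2 2 3 3 1) + (-1) * (hsp 2 3 1 3)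
  have kk2332 : w 2 3 3 2 = 0 := by linear_combination (-1) * (z2323) + (1) * (hs2 2 3 3 2)
  have kk2333 : w 2 3 3 3 = 0 := by linear_combination (1/2) * (hs2 2 3 3 3)
  have kk3000 : w 3 0 0 0 = 0 := by linear_combination (1/2) * (hs2 3 0 0 0)
  have kk3001 : w 3 0 0 1 = 0 := by linear_combination (-1) * (z0103) + (1) * (hs1 3 0 0 1) + (-1) * (hsp 0 3 0 1)
  have kk3002 : w 3 0 0 2 = 0 := by linear_combination (-1) * (z0203) + (1) * (hs1 3 0 0 2) + (-1) * (hsp 0 3 0 2)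
  have kk3003 : w 3 0 0 3 = 0 := by linear_combination (-1) * (z0303) + (1) * (hs1 3 0 0 3)
  have kk3010 : w 3 0 1 0 = 0 := by linear_combination (1) * (z0103) + (1) * (hs1 3 0 1 0) + (-1) * (hs2 0 3 1 0) + (1) * (hsp 0 3 0 1)
  have kk3011 : w 3 0 1 1 = 0 := by linear_combination (1/2) * (hs2 3 0 1 1)
  have kk3012 : w 3 0 1 2 = 0 := by linear_combination (-1) * (z0312) + (1) * (hs1 3 0 1 2)
  have kk3013 : w 3 0 1 3 = 0 := by linear_combination (-1) * (z0313) + (1) * (hs1 3 0 1 3)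
  have kk3020 : w 3 0 2 0 = 0 := by linear_combination (1) * (z0203) + (1) * (hs1 3 0 2 0) + (-1) * (hs2 0 3 2 0) + (1) * (hsp 0 3 0 2)
  have kk3021 : w 3 0 2 1 = 0 := by linear_combination (1) * (z0312) + (1) * (hs1 3 0 2 1) + (-1) * (hs2 0 3 2 1)
  have kk3022 : w 3 0 2 2 = 0 := by linear_combination (1/2) * (hs2 3 0 2 2)
  have kk3023 : w 3 0 2 3 = 0 := by linear_combination (-1) * (z0323) + (1) * (hs1 3 0 2 3)
  have kk3030 : w 3 0 3 0 = 0 := by linear_combination (1) * (z0303) + (1) * (hs1 3 0 3 0) + (-1) * (hs2 0 3 3 0)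
  have kk3031 : w 3 0 3 1 = 0 := by linear_combination (1) * (z0313) + (1) * (hs1 3 0 3 1) + (-1) * (hs2 0 3 3 1)
  have kk3032 : w 3 0 3 2 = 0 := by linear_combination (1) * (z0323) + (1) * (hs1 3 0 3 2) + (-1) * (hs2 0 3 3 2)
  have kk3033 : w 3 0 3 3 = 0 := by linear_combination (1/2) * (hs2 3 0 3 3)
  have kk3100 : w 3 1 0 0 = 0 := by linear_combination (1/2) * (hs2 3 1 0 0)
  have kk3101 : w 3 1 0 1 = 0 := by linear_combination (-1) * (z0113) + (1) * (hs1 3 1 0 1) + (-1) * (hsp 1 3 0 1)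
  have kk3102 : w 3 1 0 2 = 0 := by linear_combination (-1) * (z0213) + (1) * (hs1 3 1 0 2) + (-1) * (hsp 1 3 0 2)
  have kk3103 : w 3 1 0 3 = 0 := by linear_combination (-1) * (z0313) + (1) * (hs1 3 1 0 3) + (-1) * (hsp 1 3 0 3)
  have kk3110 : w 3 1 1 0 = 0 := by linear_combination (1) * (z0113) + (1) * (hs1 3 1 1 0) + (-1) * (hs2 1 3 1 0) + (1) * (hsp 1 3 0 1)
  have kk3111 : w 3 1 1 1 = 0 := by linear_combination (1/2) * (hs2 3 1 1 1)
  have kk3112 : w 3 1 1 2 = 0 := by linear_combination (-1) * (z1213) + (1) * (hs1 3 1 1 2) + (-1) * (hsp 1 3 1 2)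
  have kk3113 : w 3 1 1 3 = 0 := by linear_combination (-1) * (z1313) + (1) * (hs1 3 1 1 3)
  have kk3120 : w 3 1 2 0 = 0 := by linear_combination (1) * (z0213) + (1) * (hs1 3 1 2 0) + (-1) * (hs2 1 3 2 0) + (1) * (hsp 1 3 0 2)
  have kk3121 : w 3 1 2 1 = 0 := by linear_combination (1) * (z1213) + (1) * (hs1 3 1 2 1) + (-1) * (hs2 1 3 2 1) + (1) * (hsp 1 3 1 2)
  have kk3122 : w 3 1 2 2 = 0 := by linear_combination (1/2) * (hs2 3 1 2 2)
  have kk3123 : w 3 1 2 3 = 0 := by linear_combination (-1) * (z1323) + (1) * (hs1 3 1 2 3)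
  have kk3130 : w 3 1 3 0 = 0 := by linear_combination (1) * (z0313) + (1) * (hs1 3 1 3 0) + (-1) * (hs2 1 3 3 0) + (1) * (hsp 1 3 0 3)
  have kk3131 : w 3 1 3 1 = 0 := by linear_combination (1) * (z1313) + (1) * (hs1 3 1 3 1) + (-1) * (hs2 1 3 3 1)
  have kk3132 : w 3 1 3 2 = 0 := by linear_combination (1) * (z1323) + (1) * (hs1 3 1 3 2) + (-1) * (hs2 1 3 3 2)
  have kk3133 : w 3 1 3 3 = 0 := by linear_combination (1/2) * (hs2 3 1 3 3)
  have kk3200 : w 3 2 0 0 = 0 := by linear_combination (1/2) * (hs2 3 2 0 0)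
  have kk3201 : w 3 2 0 1 = 0 := by linear_combination (-1) * (z0123) + (1) * (hs1 3 2 0 1) + (-1) * (hsp 2 3 0 1)
  have kk3202 : w 3 2 0 2 = 0 := by linear_combination (-1) * (z0223) + (1) * (hs1 3 2 0 2) + (-1) * (hsp 2 3 0 2)
  have kk3203 : w 3 2 0 3 = 0 := by linear_combination (-1) * (z0323) + (1) * (hs1 3 2 0 3) + (-1) * (hsp 2 3 0 3)
  have kk3210 : w 3 2 1 0 = 0 := by linear_combination (1) * (z0123) + (1) * (hs1 3 2 1 0) + (-1) * (hs2 2 3 1 0) + (1) * (hsp 2 3 0 1)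
  have kk3211 : w 3 2 1 1 = 0 := by linear_combination (1/2) * (hs2 3 2 1 1)
  have kk3212 : w 3 2 1 2 = 0 := by linear_combination (-1) * (z1223) + (1) * (hs1 3 2 1 2) + (-1) * (hsp 2 3 1 2)
  have kk3213 : w 3 2 1 3 = 0 := by linear_combination (-1) * (z1323) + (1) * (hs1 3 2 1 3) + (-1) * (hsp 2 3 1 3)
  have kk3220 : w 3 2 2 0 = 0 := by linear_combination (1) * (z0223) + (1) * (hs1 3 2 2 0) + (-1) * (hs2 2 3 2 0) + (1) * (hsp 2 3 0 2)
  have kk3221 : w 3 2 2 1 = 0 := by linear_combination (1) * (z1223) + (1) * (hs1 3 2 2 1) + (-1) * (hs2 2 3 2 1) + (1) * (hsp 2 3 1 2)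
  have kk3222 : w 3 2 2 2 = 0 := by linear_combination (1/2) * (hs2 3 2 2 2)
  have kk3223 : w 3 2 2 3 = 0 := by linear_combination (-1) * (z2323) + (1) * (hs1 3 2 2 3)
  have kk3230 : w 3 2 3 0 = 0 := by linear_combination (1) * (z0323) + (1) * (hs1 3 2 3 0) + (-1) * (hs2 2 3 3 0) + (1) * (hsp 2 3 0 3)
  have kk3231 : w 3 2 3 1 = 0 := by linear_combination (1) * (z1323) + (1) * (hs1 3 2 3 1) + (-1) * (hs2 2 3 3 1) + (1) * (hsp 2 3 1 3)
  have kk3232 : w 3 2 3 2 = 0 := by linear_combination (1) * (z2323) + (1) * (hs1 3 2 3 2) + (-1) * (hs2 2 3 3 2)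
  have kk3233 : w 3 2 3 3 = 0 := by linear_combination (1/2) * (hs2 3 2 3 3)
  have kk3300 : w 3 3 0 0 = 0 := by linear_combination (1/2) * (hs1 3 3 0 0)
  have kk3301 : w 3 3 0 1 = 0 := by linear_combination (1/2) * (hs1 3 3 0 1)
  have kk3302 : w 3 3 0 2 = 0 := by linear_combination (1/2) * (hs1 3 3 0 2)
  have kk3303 : w 3 3 0 3 = 0 := by linear_combination (1/2) * (hs1 3 3 0 3)
  have kk3310 : w 3 3 1 0 = 0 := by linear_combination (1/2) * (hs1 3 3 1 0)
  have kk3311 : w 3 3 1 1 = 0 := by linear_combination (1/2) * (hs1 3 3 1 1)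
  have kk3312 : w 3 3 1 2 = 0 := by linear_combination (1/2) * (hs1 3 3 1 2)
  have kk3313 : w 3 3 1 3 = 0 := by linear_combination (1/2) * (hs1 3 3 1 3)
  have kk3320 : w 3 3 2 0 = 0 := by linear_combination (1/2) * (hs1 3 3 2 0)
  have kk3321 : w 3 3 2 1 = 0 := by linear_combination (1/2) * (hs1 3 3 2 1)
  have kk3322 : w 3 3 2 2 = 0 := by linear_combination (1/2) * (hs1 3 3 2 2)
  have kk3323 : w 3 3 2 3 = 0 := by linear_combination (1/2) * (hs1 3 3 2 3)
  have kk3330 : w 3 3 3 0 = 0 := by linear_combination (1/2) * (hs1 3 3 3 0)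
  have kk3331 : w 3 3 3 1 = 0 := by linear_combination (1/2) * (hs1 3 3 3 1)
  have kk3332 : w 3 3 3 2 = 0 := by linear_combination (1/2) * (hs1 3 3 3 2)
  have kk3333 : w 3 3 3 3 = 0 := by linear_combination (1/2) * (hs1 3 3 3 3)
  intro i j k l
  fin_cases i <;> fin_cases j <;> fin_cases k <;> fin_cases l
  · exact kk0000
  · exact kk0001
  · exact kk0002
  · exact kk0003
  · exact kk0010
  · exact kk0011
  · exact kk0012
  · exact kk0013
  · exact kk0020
  · exact kk0021
  · exact kk0022
  · exact kk0023
  · exact kk0030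
  · exact kk0031
  · exact kk0032
  · exact kk0033
  · exact kk0100
  · exact kk0101
  · exact kk0102
  · exact kk0103
  · exact kk0110
  · exact kk0111
  · exact kk0112
  · exact kk0113
  · exact kk0120
  · exact kk0121
  · exact kk0122
  · exact kk0123
  · exact kk0130
  · exact kk0131
  · exact kk0132
  · exact kk0133
  · exact kk0200
  · exact kk0201
  · exact kk0202
  · exact kk0203
  · exact kk0210
  · exact kk0211
  · exact kk0212
  · exact kk0213
  · exact kk0220
  · exact kk0221
  · exact kk0222
  · exact kk0223
  · exact kk0230
  · exact kk0231
  · exact kk0232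
  · exact kk0233
  · exact kk0300
  · exact kk0301
  · exact kk0302
  · exact kk0303
  · exact kk0310
  · exact kk0311
  · exact kk0312
  · exact kk0313
  · exact kk0320
  · exact kk0321
  · exact kk0322
  · exact kk0323
  · exact kk0330
  · exact kk0331
  · exact kk0332
  · exact kk0333
  · exact kk1000
  · exact kk1001
  · exact kk1002
  · exact kk1003
  · exact kk1010
  · exact kk1011
  · exact kk1012
  · exact kk1013
  · exact kk1020
  · exact kk1021
  · exact kk1022
  · exact kk1023
  · exact kk1030
  · exact kk1031
  · exact kk1032
  · exact kk1033
  · exact kk1100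
  · exact kk1101
  · exact kk1102
  · exact kk1103
  · exact kk1110
  · exact kk1111
  · exact kk1112
  · exact kk1113
  · exact kk1120
  · exact kk1121
  · exact kk1122
  · exact kk1123
  · exact kk1130
  · exact kk1131
  · exact kk1132
  · exact kk1133
  · exact kk1200
  · exact kk1201
  · exact kk1202
  · exact kk1203
  · exact kk1210
  · exact kk1211
  · exact kk1212
  · exact kk1213
  · exact kk1220
  · exact kk1221
  · exact kk1222
  · exact kk1223
  · exact kk1230
  · exact kk1231
  · exact kk1232
  · exact kk1233
  · exact kk1300
  · exact kk1301
  · exact kk1302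
  · exact kk1303
  · exact kk1310
  · exact kk1311
  · exact kk1312
  · exact kk1313
  · exact kk1320
  · exact kk1321
  · exact kk1322
  · exact kk1323
  · exact kk1330
  · exact kk1331
  · exact kk1332
  · exact kk1333
  · exact kk2000
  · exact kk2001
  · exact kk2002
  · exact kk2003
  · exact kk2010
  · exact kk2011
  · exact kk2012
  · exact kk2013
  · exact kk2020
  · exact kk2021
  · exact kk2022
  · exact kk2023
  · exact kk2030
  · exact kk2031
  · exact kk2032
  · exact kk2033
  · exact kk2100
  · exact kk2101
  · exact kk2102
  · exact kk2103
  · exact kk2110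
  · exact kk2111
  · exact kk2112
  · exact kk2113
  · exact kk2120
  · exact kk2121
  · exact kk2122
  · exact kk2123
  · exact kk2130
  · exact kk2131
  · exact kk2132
  · exact kk2133
  · exact kk2200
  · exact kk2201
  · exact kk2202
  · exact kk2203
  · exact kk2210
  · exact kk2211
  · exact kk2212
  · exact kk2213
  · exact kk2220
  · exact kk2221
  · exact kk2222
  · exact kk2223
  · exact kk2230
  · exact kk2231
  · exact kk2232
  · exact kk2233
  · exact kk2300
  · exact kk2301
  · exact kk2302
  · exact kk2303
  · exact kk2310
  · exact kk2311
  · exact kk2312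
  · exact kk2313
  · exact kk2320
  · exact kk2321
  · exact kk2322
  · exact kk2323
  · exact kk2330
  · exact kk2331
  · exact kk2332
  · exact kk2333
  · exact kk3000
  · exact kk3001
  · exact kk3002
  · exact kk3003
  · exact kk3010
  · exact kk3011
  · exact kk3012
  · exact kk3013
  · exact kk3020
  · exact kk3021
  · exact kk3022
  · exact kk3023
  · exact kk3030
  · exact kk3031
  · exact kk3032
  · exact kk3033
  · exact kk3100
  · exact kk3101
  · exact kk3102
  · exact kk3103
  · exact kk3110
  · exact kk3111
  · exact kk3112
  · exact kk3113
  · exact kk3120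
  · exact kk3121
  · exact kk3122
  · exact kk3123
  · exact kk3130
  · exact kk3131
  · exact kk3132
  · exact kk3133
  · exact kk3200
  · exact kk3201
  · exact kk3202
  · exact kk3203
  · exact kk3210
  · exact kk3211
  · exact kk3212
  · exact kk3213
  · exact kk3220
  · exact kk3221
  · exact kk3222
  · exact kk3223
  · exact kk3230
  · exact kk3231
  · exact kk3232
  · exact kk3233
  · exact kk3300
  · exact kk3301
  · exact kk3302
  · exact kk3303
  · exact kk3310
  · exact kk3311
  · exact kk3312
  · exact kk3313
  · exact kk3320
  · exact kk3321
  · exact kk3322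
  · exact kk3323
  · exact kk3330
  · exact kk3331
  · exact kk3332
  · exact kk3333



set_option maxHeartbeats 1000000 in
/-- Pointwise linear algebra for Theorem 7.5: on a 4-dimensional real vector space with a
Lorentzian metric `g` of signature `(+,+,+,−)` (given by an orthonormal basis `e`), a tensor
`W` with Weyl symmetries (Riemann symmetries, first Bianchi identity, totally trace-free)
that is annihilated by insertion of a non-null vector `n` in the last slot must vanish. -/
theorem stmt13 (V : Type*) [AddCommGroup V] [Module ℝ V]
    (g : V →ₗ[ℝ] V →ₗ[ℝ] ℝ)
    (e : Module.Basis (Fin 4) ℝ V)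
    (hg : ∀ i j : Fin 4, g (e i) (e j) =
      if i = j then (if (i : ℕ) < 3 then (1 : ℝ) else -1) else 0)
    (hgsymm : ∀ x y : V, g x y = g y x)
    (W : V →ₗ[ℝ] V →ₗ[ℝ] V →ₗ[ℝ] V →ₗ[ℝ] ℝ)
    (hskew1 : ∀ a b c d : V, W a b c d = -W b a c d)
    (hskew2 : ∀ a b c d : V, W a b c d = -W a b d c)
    (hpair : ∀ a b c d : V, W a b c d = W c d a b)
    (hbianchi : ∀ a b c d : V, W a b c d + W a c d b + W a d b c = 0)
    (htrace : ∀ b d : V, ∑ i : Fin 4, g (e i) (e i) * W (e i) b (e i) d = 0)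
    (n : V) (hn : g n n ≠ 0)
    (hW : ∀ a b c : V, W a b c n = 0) :
    W = 0 := by
  have hrep : n = e.repr n 0 • e 0 + e.repr n 1 • e 1 + e.repr n 2 • e 2 + e.repr n 3 • e 3 := by
    have h := e.sum_repr n
    rw [Fin.sum_univ_four] at h
    exact h.symm
  set c0 := e.repr n 0 with hc0
  set c1 := e.repr n 1 with hc1
  set c2 := e.repr n 2 with hc2
  set c3 := e.repr n 3 with hc3
  have hgnn : g n n = c0 ^ 2 + c1 ^ 2 + c2 ^ 2 - c3 ^ 2 := by
    conv_lhs => rw [hrep]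
    simp only [map_add, map_smul, LinearMap.add_apply, LinearMap.smul_apply, smul_eq_mul]
    rw [hg 0 0, hg 0 1, hg 0 2, hg 0 3, hg 1 0, hg 1 1, hg 1 2, hg 1 3,
        hg 2 0, hg 2 1, hg 2 2, hg 2 3, hg 3 0, hg 3 1, hg 3 2, hg 3 3]
    norm_num [Fin.ext_iff, show ((0:Fin 4):ℕ) = 0 from rfl, show ((1:Fin 4):ℕ) = 1 from rfl,
      show ((2:Fin 4):ℕ) = 2 from rfl, show ((3:Fin 4):ℕ) = 3 from rfl]
    ring
  have hQ : c0 ^ 2 + c1 ^ 2 + c2 ^ 2 - c3 ^ 2 ≠ 0 := by rw [← hgnn]; exact hn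
  have hC : ∀ i j k : Fin 4, c0 * W (e i) (e j) (e k) (e 0) + c1 * W (e i) (e j) (e k) (e 1)
      + c2 * W (e i) (e j) (e k) (e 2) + c3 * W (e i) (e j) (e k) (e 3) = 0 := by
    intro i j k
    have h := hW (e i) (e j) (e k)
    rw [hrep] at h
    simp only [map_add, map_smul, smul_eq_mul] at h
    linear_combination h
  have hT : ∀ b d : Fin 4, W (e 0) (e b) (e 0) (e d) + W (e 1) (e b) (e 1) (e d)
      + W (e 2) (e b) (e 2) (e d) - W (e 3) (e b) (e 3) (e d) = 0 := by
    intro b d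
    have h := htrace (e b) (e d)
    rw [Fin.sum_univ_four, hg 0 0, hg 1 1, hg 2 2, hg 3 3] at h
    norm_num [Fin.ext_iff, show ((0:Fin 4):ℕ) = 0 from rfl, show ((1:Fin 4):ℕ) = 1 from rfl,
      show ((2:Fin 4):ℕ) = 2 from rfl, show ((3:Fin 4):ℕ) = 3 from rfl] at h
    linear_combination h
  have key := aux13 c0 c1 c2 c3 (fun i j k l => W (e i) (e j) (e k) (e l))
    (fun i j k l => hskew1 (e i) (e j) (e k) (e l))
    (fun i j k l => hskew2 (e i) (e j) (e k) (e l))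
    (fun i j k l => hpair (e i) (e j) (e k) (e l))
    (hbianchi (e 0) (e 1) (e 2) (e 3))
    hC hT hQ
  refine Module.Basis.ext e fun i => ?_
  refine Module.Basis.ext e fun j => ?_
  refine Module.Basis.ext e fun k => ?_
  refine Module.Basis.ext e fun l => ?_
  simpa using key i j k l
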